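/- Let A ∈ ℤ^{m×n}, let H ≥ herdisc(A) be a real number, let b ∈ ℤ^m, let K ≥ 1 and i ∈ {1,…,K} be integers, and let b' ∈ ℤ^m satisfy ‖b' − 2^{i−K}·b‖_∞ ≤ 4H. Then for every x ∈ ℤ^n with x ≥ 0 componentwise, Ax = b' and ‖x‖₁ ≤ (6/5)^i, there exists z ∈ ℤ^n with 0 ≤ z_i ≤ x_i for all i, ‖z‖₁ ≤ (6/5)^{i−1}, ‖x − z‖₁ ≤ (6/5)^{i−1}, ‖Az − 2^{(i−1)−K}·b‖_∞ ≤ 4H, and ‖A(x − z) − 2^{(i−1)−K}·b‖_∞ ≤ 4H. -/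

import Mathlib

open Matrix Finset

/-- The hereditary discrepancy of a real matrix:
`herdisc A = max over column subsets I of min over z ∈ {0,1}^n of ‖A_I (z − 1/2)‖_∞`. -/
noncomputable def herdisc {m n : ℕ} (A : Matrix (Fin m) (Fin n) ℝ) : ℝ :=
  Finset.univ.sup' Finset.univ_nonempty fun I : Finset (Fin n) =>
    Finset.univ.inf' Finset.univ_nonempty fun z : Fin n → Bool =>
      ‖(fun i : Fin m => ∑ j ∈ I, A i j * ((if z j then (1 : ℝ) else 0) - 1/2))‖

lemma herdisc_nonneg' {m n : ℕ} (A : Matrix (Fin m) (Fin n) ℝ) : 0 ≤ herdisc A := by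
  classical
  refine le_trans ?_ (Finset.le_sup' _ (Finset.mem_univ (∅ : Finset (Fin n))))
  refine Finset.le_inf' _ _ fun z _ => norm_nonneg _

lemma exists_coloring {m n : ℕ} (A : Matrix (Fin m) (Fin n) ℤ) (H : ℝ)
    (hH : herdisc (A.map (Int.cast : ℤ → ℝ)) ≤ H) (P : Finset (Fin n)) :
    ∃ ε : Fin n → Bool, ∀ r : Fin m,
      |∑ j ∈ P, (A r j : ℝ) * ((if ε j then (1 : ℝ) else 0) - 1/2)| ≤ H := by
  classical
  set F := A.map (Int.cast : ℤ → ℝ) with hF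
  have h1 : (Finset.univ.inf' Finset.univ_nonempty fun z : Fin n → Bool =>
      ‖(fun i : Fin m => ∑ j ∈ P, F i j * ((if z j then (1 : ℝ) else 0) - 1/2))‖) ≤
      herdisc F := by
    unfold herdisc
    exact Finset.le_sup' (fun I : Finset (Fin n) =>
      Finset.univ.inf' Finset.univ_nonempty fun z : Fin n → Bool =>
        ‖(fun i : Fin m => ∑ j ∈ I, F i j * ((if z j then (1 : ℝ) else 0) - 1/2))‖)
      (Finset.mem_univ P)
  obtain ⟨ε, -, hε⟩ := Finset.exists_mem_eq_inf' (Finset.univ_nonempty)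
      (fun z : Fin n → Bool =>
        ‖(fun i : Fin m => ∑ j ∈ P, F i j * ((if z j then (1 : ℝ) else 0) - 1/2))‖)
  refine ⟨ε, fun r => ?_⟩
  have h2 : ‖(fun i : Fin m => ∑ j ∈ P, F i j * ((if ε j then (1 : ℝ) else 0) - 1/2))‖ ≤ H := by
    rw [← hε]; exact h1.trans hH
  have h3 := (norm_le_pi_norm
      (fun i : Fin m => ∑ j ∈ P, F i j * ((if ε j then (1 : ℝ) else 0) - 1/2)) r).trans h2
  simpa [hF, Matrix.map_apply, Real.norm_eq_abs] using h3

lemma flip_sum_real {m n : ℕ} (A : Matrix (Fin m) (Fin n) ℤ) (P : Finset (Fin n))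
    (ε : Fin n → Bool) (r : Fin m) :
    ∑ j ∈ P, (A r j : ℝ) * ((if !(ε j) then (1 : ℝ) else 0) - 1/2)
      = -∑ j ∈ P, (A r j : ℝ) * ((if ε j then (1 : ℝ) else 0) - 1/2) := by
  rw [← Finset.sum_neg_distrib]
  refine Finset.sum_congr rfl fun j _ => ?_
  have h1 : ((if !(ε j) then (1 : ℝ) else 0) - 1/2) = -((if ε j then (1 : ℝ) else 0) - 1/2) := by
    cases hj : ε j <;> norm_num
  rw [h1, mul_neg]

lemma flip_sum_int {n : ℕ} (P : Finset (Fin n)) (ε : Fin n → Bool) :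
    ∑ j ∈ P, (if !(ε j) then (1 : ℤ) else 0)
      = P.card - ∑ j ∈ P, (if ε j then (1 : ℤ) else 0) := by
  rw [eq_sub_iff_add_eq, ← Finset.sum_add_distrib]
  have : ∀ j ∈ P, ((if !(ε j) then (1 : ℤ) else 0) + (if ε j then (1 : ℤ) else 0)) = 1 := by
    intro j _; cases hj : ε j <;> simp
  rw [Finset.sum_congr rfl this, Finset.sum_const, nsmul_eq_mul, mul_one]

lemma exists_coloring_maj {m n : ℕ} (A : Matrix (Fin m) (Fin n) ℤ) (H : ℝ)
    (hH : herdisc (A.map (Int.cast : ℤ → ℝ)) ≤ H) (P : Finset (Fin n)) :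
    ∃ ε : Fin n → Bool,
      (∀ r : Fin m, |∑ j ∈ P, (A r j : ℝ) * ((if ε j then (1 : ℝ) else 0) - 1/2)| ≤ H) ∧
      (P.card : ℤ) ≤ 2 * ∑ j ∈ P, (if ε j then (1 : ℤ) else 0) := by
  obtain ⟨ε, hε⟩ := exists_coloring A H hH P
  by_cases hc : (P.card : ℤ) ≤ 2 * ∑ j ∈ P, (if ε j then (1 : ℤ) else 0)
  · exact ⟨ε, hε, hc⟩
  · refine ⟨fun j => !(ε j), fun r => ?_, ?_⟩
    · rw [flip_sum_real, abs_neg]; exact hε r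
    · rw [flip_sum_int]; omega

lemma exists_coloring_min {m n : ℕ} (A : Matrix (Fin m) (Fin n) ℤ) (H : ℝ)
    (hH : herdisc (A.map (Int.cast : ℤ → ℝ)) ≤ H) (P : Finset (Fin n)) :
    ∃ ε : Fin n → Bool,
      (∀ r : Fin m, |∑ j ∈ P, (A r j : ℝ) * ((if ε j then (1 : ℝ) else 0) - 1/2)| ≤ H) ∧
      2 * ∑ j ∈ P, (if ε j then (1 : ℤ) else 0) ≤ (P.card : ℤ) := by
  obtain ⟨ε, hε⟩ := exists_coloring A H hH P
  by_cases hc : 2 * ∑ j ∈ P, (if ε j then (1 : ℤ) else 0) ≤ (P.card : ℤ)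
  · exact ⟨ε, hε, hc⟩
  · refine ⟨fun j => !(ε j), fun r => ?_, ?_⟩
    · rw [flip_sum_real, abs_neg]; exact hε r
    · rw [flip_sum_int]; omega

/-- Correctness of the dynamic-programming recursion: any nonnegative integer solution of
`Ax = b'` with `‖x‖₁ ≤ (6/5)^i`, where `‖b' − 2^{i−K}b‖_∞ ≤ 4H` and
`H ≥ herdisc A`, splits as `x = z + (x − z)` into two halves of ℓ₁ norm at most
`(6/5)^{i−1}` whose right-hand sides are within `ℓ∞`-distance `4H` of `2^{(i−1)−K}b`. -/
theorem dynamic_program_split {m n : ℕ} (A : Matrix (Fin m) (Fin n) ℤ) (H : ℝ)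
    (hH : herdisc (A.map (Int.cast : ℤ → ℝ)) ≤ H)
    (b : Fin m → ℤ) (K i : ℕ) (hi1 : 1 ≤ i) (hiK : i ≤ K)
    (b' : Fin m → ℤ)
    (hb' : ‖(fun r : Fin m => (b' r : ℝ) - 2 ^ ((i : ℤ) - (K : ℤ)) * (b r : ℝ))‖ ≤ 4 * H) :
    ∀ x : Fin n → ℤ, 0 ≤ x → A.mulVec x = b' →
      ((∑ j, |x j| : ℤ) : ℝ) ≤ (6 / 5 : ℝ) ^ i →
      ∃ z : Fin n → ℤ, (∀ j, 0 ≤ z j) ∧ (∀ j, z j ≤ x j) ∧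
        ((∑ j, |z j| : ℤ) : ℝ) ≤ (6 / 5 : ℝ) ^ (i - 1) ∧
        ((∑ j, |x j - z j| : ℤ) : ℝ) ≤ (6 / 5 : ℝ) ^ (i - 1) ∧
        ‖(fun r : Fin m => ((A.mulVec z) r : ℝ) -
          2 ^ (((i : ℤ) - 1) - (K : ℤ)) * (b r : ℝ))‖ ≤ 4 * H ∧
        ‖(fun r : Fin m => ((A.mulVec (x - z)) r : ℝ) -
          2 ^ (((i : ℤ) - 1) - (K : ℤ)) * (b r : ℝ))‖ ≤ 4 * H := by
  classical
  intro x hx hAx hxl1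
  have hx' : ∀ j, 0 ≤ x j := fun j => hx j
  have hH0 : 0 ≤ H := le_trans (herdisc_nonneg' _) hH
  set I : Finset (Fin n) := Finset.univ.filter (fun j => x j % 2 = 1) with hIdef
  obtain ⟨P, hPI, hPcard⟩ := Finset.exists_subset_card_eq (s := I) (n := (I.card + 1) / 2) (by omega)
  set Q : Finset (Fin n) := I \ P with hQdef
  have hQI : Q ⊆ I := Finset.sdiff_subset
  have hdisj : Disjoint P Q := Finset.disjoint_sdiff
  have hPle : P.card ≤ I.card := Finset.card_le_card hPI
  have hPQcard : P.card + Q.card = I.card := by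
    rw [hQdef, Finset.card_sdiff_of_subset hPI]; omega
  have hodd : ∀ j ∈ I, x j % 2 = 1 := by
    intro j hj; simpa [hIdef] using hj
  have heven : ∀ j, j ∉ I → x j % 2 = 0 := by
    intro j hj
    have h2 := Int.emod_two_eq_zero_or_one (x j)
    simp only [hIdef, Finset.mem_filter, Finset.mem_univ, true_and] at hj
    omega
  obtain ⟨εP, hPd, hPc2⟩ := exists_coloring_maj A H hH P
  obtain ⟨εQ, hQd, hQc2⟩ := exists_coloring_min A H hH Q
  set z : Fin n → ℤ := fun j => x j / 2 +
      ((if j ∈ P then (if εP j then (1 : ℤ) else 0) else 0) +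
       (if j ∈ Q then (if εQ j then (1 : ℤ) else 0) else 0)) with hzdef
  have hz0 : ∀ j, 0 ≤ z j := by
    intro j; have := hx' j; simp only [hzdef]; split_ifs <;> omega
  have hzx : ∀ j, z j ≤ x j := by
    intro j; have h0 := hx' j
    by_cases hp : j ∈ P
    · have h1 := hodd j (hPI hp)
      have hq : j ∉ Q := fun hq => Finset.disjoint_left.mp hdisj hp hq
      simp only [hzdef, if_pos hp, if_neg hq]; split_ifs <;> omega
    · by_cases hq : j ∈ Q
      · have h1 := hodd j (hQI hq)
        simp only [hzdef, if_neg hp, if_pos hq]; split_ifs <;> omega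
      · simp only [hzdef, if_neg hp, if_neg hq]; omega
  set N : ℤ := ∑ j, x j with hNdef
  set tP : ℤ := ∑ j ∈ P, (if εP j then (1 : ℤ) else 0) with htPdef
  set tQ : ℤ := ∑ j ∈ Q, (if εQ j then (1 : ℤ) else 0) with htQdef
  set Zs : ℤ := ∑ j, z j with hZsdef
  have hzsum : Zs = (∑ j, x j / 2) + tP + tQ := by
    rw [hZsdef]
    simp only [hzdef]
    rw [Finset.sum_add_distrib, Finset.sum_add_distrib, Finset.sum_ite_mem,
      Finset.sum_ite_mem, Finset.univ_inter, Finset.univ_inter, ← htPdef, ← htQdef]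
    ring
  have hxsum : N = 2 * (∑ j, x j / 2) + I.card := by
    have e1 : ∀ j : Fin n, x j = 2 * (x j / 2) + x j % 2 := by
      intro j; omega
    have e2 : ∀ j : Fin n, x j % 2 = if j ∈ I then (1 : ℤ) else 0 := by
      intro j; by_cases hj : j ∈ I
      · simp [hj, hodd j hj]
      · simp [hj, heven j hj]
    calc N = ∑ j, (2 * (x j / 2) + x j % 2) := Finset.sum_congr rfl fun j _ => e1 j
      _ = 2 * (∑ j, x j / 2) + ∑ j, x j % 2 := by
          rw [Finset.sum_add_distrib, Finset.mul_sum]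
      _ = 2 * (∑ j, x j / 2) + I.card := by
          rw [Finset.sum_congr rfl fun j _ => e2 j, Finset.sum_ite_mem, Finset.univ_inter,
            Finset.sum_const, nsmul_eq_mul, mul_one]
  have htPle : tP ≤ (P.card : ℤ) := by
    rw [htPdef]
    calc ∑ j ∈ P, (if εP j then (1 : ℤ) else 0) ≤ ∑ _j ∈ P, (1 : ℤ) :=
          Finset.sum_le_sum fun j _ => by split_ifs <;> norm_num
      _ = P.card := by simp
  have htQ0 : 0 ≤ tQ := Finset.sum_nonneg fun j _ => by split_ifs <;> norm_num
  have hsLeN : (I.card : ℤ) ≤ N := by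
    have h1 : (I.card : ℤ) = ∑ _j ∈ I, (1 : ℤ) := by simp
    rw [h1, hNdef]
    refine le_trans (Finset.sum_le_sum fun j hj => ?_)
      (Finset.sum_le_sum_of_subset_of_nonneg (Finset.subset_univ I) fun j _ _ => hx' j)
    have h2 := hodd j hj; have h3 := hx' j; omega
  -- pointwise real identity
  have hptw : ∀ j : Fin n, (z j : ℝ) - (x j : ℝ) / 2 =
      (if j ∈ P then ((if εP j then (1 : ℝ) else 0) - 1/2) else 0)
      + (if j ∈ Q then ((if εQ j then (1 : ℝ) else 0) - 1/2) else 0) := by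
    intro j
    have e1 : (x j : ℝ) = 2 * ((x j / 2 : ℤ) : ℝ) + ((x j % 2 : ℤ) : ℝ) := by
      have : x j = 2 * (x j / 2) + x j % 2 := by omega
      exact_mod_cast congrArg (Int.cast : ℤ → ℝ) this
    by_cases hp : j ∈ P
    · have hq : j ∉ Q := fun hq => Finset.disjoint_left.mp hdisj hp hq
      have ho : x j % 2 = 1 := hodd j (hPI hp)
      rw [ho] at e1
      simp only [hzdef, if_pos hp, if_neg hq]
      push_cast
      rw [e1]
      cases hε : εP j <;> simp <;> try ring
    · by_cases hq : j ∈ Q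
      · have ho : x j % 2 = 1 := hodd j (hQI hq)
        rw [ho] at e1
        simp only [hzdef, if_neg hp, if_pos hq]
        push_cast
        rw [e1]
        cases hε : εQ j <;> simp <;> try ring
      · have hnI : j ∉ I := by
          intro hj; rcases (em (j ∈ P)) with h | h
          · exact hp h
          · exact hq (Finset.mem_sdiff.mpr ⟨hj, h⟩)
        have ho : x j % 2 = 0 := heven j hnI
        rw [ho] at e1
        simp only [hzdef, if_neg hp, if_neg hq]
        push_cast
        rw [e1]
        push_cast
        ring
  have hAzr : ∀ r : Fin m, ((A.mulVec z) r : ℝ) = ∑ j, (A r j : ℝ) * (z j : ℝ) := by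
    intro r; simp [Matrix.mulVec, dotProduct]
  have hAxr : ∀ r : Fin m, ((b' r : ℤ) : ℝ) = ∑ j, (A r j : ℝ) * (x j : ℝ) := by
    intro r; rw [← hAx]; simp [Matrix.mulVec, dotProduct]
  have hkey : ∀ r : Fin m, |((A.mulVec z) r : ℝ) - (1/2) * (b' r : ℝ)| ≤ 2 * H := by
    intro r
    have hsplit : ((A.mulVec z) r : ℝ) - (1/2) * (b' r : ℝ)
        = (∑ j ∈ P, (A r j : ℝ) * ((if εP j then (1 : ℝ) else 0) - 1/2))
        + (∑ j ∈ Q, (A r j : ℝ) * ((if εQ j then (1 : ℝ) else 0) - 1/2)) := by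
      rw [hAzr r, hAxr r, Finset.mul_sum, ← Finset.sum_sub_distrib]
      have e3 : ∀ j : Fin n, (A r j : ℝ) * (z j : ℝ) - 1/2 * ((A r j : ℝ) * (x j : ℝ))
          = (if j ∈ P then (A r j : ℝ) * ((if εP j then (1 : ℝ) else 0) - 1/2) else 0)
          + (if j ∈ Q then (A r j : ℝ) * ((if εQ j then (1 : ℝ) else 0) - 1/2) else 0) := by
        intro j
        have h4 : (A r j : ℝ) * (z j : ℝ) - 1/2 * ((A r j : ℝ) * (x j : ℝ))
            = (A r j : ℝ) * ((z j : ℝ) - (x j : ℝ) / 2) := by ring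
        rw [h4, hptw j, mul_add]
        congr 1 <;> split_ifs <;> simp
      rw [Finset.sum_congr rfl fun j _ => e3 j, Finset.sum_add_distrib,
        Finset.sum_ite_mem, Finset.sum_ite_mem, Finset.univ_inter, Finset.univ_inter]
    rw [hsplit]
    calc |(∑ j ∈ P, (A r j : ℝ) * ((if εP j then (1 : ℝ) else 0) - 1/2))
        + (∑ j ∈ Q, (A r j : ℝ) * ((if εQ j then (1 : ℝ) else 0) - 1/2))|
        ≤ |∑ j ∈ P, (A r j : ℝ) * ((if εP j then (1 : ℝ) else 0) - 1/2)|
        + |∑ j ∈ Q, (A r j : ℝ) * ((if εQ j then (1 : ℝ) else 0) - 1/2)| := abs_add_le _ _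
      _ ≤ H + H := add_le_add (hPd r) (hQd r)
      _ = 2 * H := by ring
  have hb'c : ∀ r : Fin m, |(b' r : ℝ) - 2 ^ ((i : ℤ) - (K : ℤ)) * (b r : ℝ)| ≤ 4 * H := by
    intro r
    have h5 := norm_le_pi_norm
      (fun r : Fin m => (b' r : ℝ) - 2 ^ ((i : ℤ) - (K : ℤ)) * (b r : ℝ)) r
    simpa [Real.norm_eq_abs] using h5.trans hb'
  have hpow : (2 : ℝ) ^ (((i : ℤ) - 1) - (K : ℤ)) = (1/2) * 2 ^ ((i : ℤ) - (K : ℤ)) := by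
    have h6 : ((i : ℤ) - 1) - (K : ℤ) = ((i : ℤ) - (K : ℤ)) - 1 := by ring
    rw [h6, zpow_sub_one₀ (two_ne_zero)]; ring
  -- ℓ₁ bounds
  have hZs0 : 0 ≤ Zs := Finset.sum_nonneg fun j _ => hz0 j
  have hZsN : Zs ≤ N := Finset.sum_le_sum fun j _ => hzx j
  have h2Pc : 2 * P.card ≤ I.card + 1 := by omega
  have h2Qc : 2 * Q.card ≤ I.card := by omega
  have hdub : 2 * Zs - N ≤ (P.card : ℤ) := by
    have := hQc2; have := htPle; omega
  have hdlb : -(Q.card : ℤ) ≤ 2 * Zs - N := by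
    have := hPc2; have := htQ0; omega
  have hNreal : (N : ℝ) ≤ (6/5 : ℝ) ^ i := by
    have habsx : (∑ j, |x j|) = N := Finset.sum_congr rfl fun j _ => abs_of_nonneg (hx' j)
    rw [← habsx]; exact hxl1
  have hgeom : (6/5 : ℝ) ^ i = (6/5 : ℝ) ^ (i - 1) * (6/5) := by
    rw [← pow_succ]; congr 1; omega
  have hone : (1 : ℝ) ≤ (6/5 : ℝ) ^ (i - 1) := one_le_pow₀ (by norm_num)
  have hl1 : (Zs : ℝ) ≤ (6/5 : ℝ) ^ (i - 1) ∧ ((N - Zs : ℤ) : ℝ) ≤ (6/5 : ℝ) ^ (i - 1) := by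
    by_cases hNsmall : N ≤ 2
    · have h7 : Zs ≤ 1 ∧ N - Zs ≤ 1 := by omega
      constructor
      · calc (Zs : ℝ) ≤ 1 := by exact_mod_cast h7.1
          _ ≤ _ := hone
      · calc ((N - Zs : ℤ) : ℝ) ≤ 1 := by exact_mod_cast h7.2
          _ ≤ _ := hone
    · push_neg at hNsmall
      have h8 : 4 * Zs ≤ 3 * N + 1 := by omega
      have h9 : 4 * (N - Zs) ≤ 3 * N + 1 := by omega
      have h8r : 4 * (Zs : ℝ) ≤ 3 * (N : ℝ) + 1 := by exact_mod_cast h8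
      have h9r : 4 * ((N - Zs : ℤ) : ℝ) ≤ 3 * (N : ℝ) + 1 := by exact_mod_cast h9
      have hN3 : (3 : ℝ) ≤ (N : ℝ) := by exact_mod_cast hNsmall
      rw [hgeom] at hNreal
      constructor <;> nlinarith
  refine ⟨z, hz0, hzx, ?_, ?_, ?_, ?_⟩
  · have habsz : (∑ j, |z j|) = Zs := Finset.sum_congr rfl fun j _ => abs_of_nonneg (hz0 j)
    rw [habsz]; exact hl1.1
  · have habsxz : (∑ j, |x j - z j|) = N - Zs := by
      rw [Finset.sum_congr rfl fun j _ => abs_of_nonneg (sub_nonneg.mpr (hzx j)),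
        Finset.sum_sub_distrib, ← hNdef, ← hZsdef]
    rw [habsxz]; exact hl1.2
  · rw [pi_norm_le_iff_of_nonneg (by linarith)]
    intro r
    rw [Real.norm_eq_abs, hpow]
    have h10 := hkey r
    have h11 := hb'c r
    have h12 : ((A.mulVec z) r : ℝ) - (1/2) * 2 ^ ((i : ℤ) - (K : ℤ)) * (b r : ℝ)
        = (((A.mulVec z) r : ℝ) - (1/2) * (b' r : ℝ))
          + (1/2) * ((b' r : ℝ) - 2 ^ ((i : ℤ) - (K : ℤ)) * (b r : ℝ)) := by ring
    rw [h12]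
    calc |(((A.mulVec z) r : ℝ) - (1/2) * (b' r : ℝ))
          + (1/2) * ((b' r : ℝ) - 2 ^ ((i : ℤ) - (K : ℤ)) * (b r : ℝ))|
        ≤ |((A.mulVec z) r : ℝ) - (1/2) * (b' r : ℝ)|
          + |(1/2) * ((b' r : ℝ) - 2 ^ ((i : ℤ) - (K : ℤ)) * (b r : ℝ))| := abs_add_le _ _
      _ ≤ 2 * H + (1/2) * (4 * H) := by
          refine add_le_add h10 ?_
          rw [abs_mul, abs_of_nonneg (by norm_num : (0:ℝ) ≤ (1/2 : ℝ))]
          linarith [h11]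
      _ = 4 * H := by ring
  · rw [pi_norm_le_iff_of_nonneg (by linarith)]
    intro r
    rw [Real.norm_eq_abs, hpow]
    have h10 := hkey r
    have h11 := hb'c r
    have hxz : ((A.mulVec (x - z)) r : ℝ) = (b' r : ℝ) - ((A.mulVec z) r : ℝ) := by
      rw [Matrix.mulVec_sub, ← hAx]
      push_cast [Pi.sub_apply]
      ring
    rw [hxz]
    have h12 : (b' r : ℝ) - ((A.mulVec z) r : ℝ)
          - (1/2) * 2 ^ ((i : ℤ) - (K : ℤ)) * (b r : ℝ)
        = -(((A.mulVec z) r : ℝ) - (1/2) * (b' r : ℝ))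
          + (1/2) * ((b' r : ℝ) - 2 ^ ((i : ℤ) - (K : ℤ)) * (b r : ℝ)) := by ring
    rw [h12]
    calc |(-(((A.mulVec z) r : ℝ) - (1/2) * (b' r : ℝ)))
          + (1/2) * ((b' r : ℝ) - 2 ^ ((i : ℤ) - (K : ℤ)) * (b r : ℝ))|
        ≤ |(-(((A.mulVec z) r : ℝ) - (1/2) * (b' r : ℝ)))|
          + |(1/2) * ((b' r : ℝ) - 2 ^ ((i : ℤ) - (K : ℤ)) * (b r : ℝ))| := abs_add_le _ _
      _ ≤ 2 * H + (1/2) * (4 * H) := by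
          refine add_le_add ?_ ?_
          · rw [abs_neg]; exact h10
          · rw [abs_mul, abs_of_nonneg (by norm_num : (0:ℝ) ≤ (1/2 : ℝ))]
            linarith [h11]
      _ = 4 * H := by ring
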